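/- If G is a cograph, then every linear coloring of G is also a centered coloring. -/

import Mathlib

/-- A linear coloring: every path in `G` contains a vertex whose color appears
exactly once on the path. -/
def IsLinearColoring {V C : Type*} [DecidableEq C] (G : SimpleGraph V) (ψ : V → C) : Prop :=
  ∀ ⦃u v : V⦄ (p : G.Walk u v), p.IsPath →
    ∃ w ∈ p.support, (p.support.map ψ).count (ψ w) = 1

/-- A centered coloring: every nonempty vertex set inducing a connected subgraph
contains a vertex whose color appears exactly once in the set. -/
def IsCenteredColoring {V C : Type*} [DecidableEq C] (G : SimpleGraph V) (φ : V → C) : Prop :=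
  ∀ S : Finset V, S.Nonempty → (G.induce (S : Set V)).Connected →
    ∃ w ∈ S, (S.filter (fun x => φ x = φ w)).card = 1

/-- The linear coloring number: minimum number of colors of a linear coloring. -/
noncomputable def chiLin {V : Type*} (G : SimpleGraph V) : ℕ :=
  sInf {k | ∃ ψ : V → Fin k, IsLinearColoring G ψ}

/-- The centered coloring number: minimum number of colors of a centered coloring. -/
noncomputable def chiCen {V : Type*} (G : SimpleGraph V) : ℕ :=
  sInf {k | ∃ φ : V → Fin k, IsCenteredColoring G φ}

/-- A treedepth decomposition of `G`: a rooted forest on the vertices of `G`,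
given by its ancestor relation `anc` (a partial order whose down-sets are chains),
such that every edge of `G` joins an ancestor-descendant pair. -/
structure TreedepthDecomp {V : Type*} (G : SimpleGraph V) where
  anc : V → V → Prop
  refl : ∀ v, anc v v
  antisymm : ∀ u v, anc u v → anc v u → u = v
  trans : ∀ u v w, anc u v → anc v w → anc u w
  chain : ∀ u v w, anc u w → anc v w → anc u v ∨ anc v u
  edge : ∀ u v, G.Adj u v → anc u v ∨ anc v u

/-- The decomposition has depth at most `k`: every ancestor-descendant chain has
at most `k` vertices. -/
def TreedepthDecomp.depthLE {V : Type*} {G : SimpleGraph V} (d : TreedepthDecomp G)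
    (k : ℕ) : Prop :=
  ∀ s : Finset V, (∀ a ∈ s, ∀ b ∈ s, d.anc a b ∨ d.anc b a) → s.card ≤ k

/-- The treedepth of `G`: minimum depth of a treedepth decomposition. -/
noncomputable def treedepth {V : Type*} (G : SimpleGraph V) : ℕ :=
  sInf {k | ∃ d : TreedepthDecomp G, d.depthLE k}

section AuxCograph

open SimpleGraph

variable {V : Type*}

/-- no induced P4 as quadruple condition -/
def P4Free (G : SimpleGraph V) : Prop :=
  ∀ a b c d : V, G.Adj a b → G.Adj b c → G.Adj c d →
    ¬ G.Adj a c → ¬ G.Adj a d → ¬ G.Adj b d → False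

lemma p4free_of_isEmpty {G : SimpleGraph V} (h : IsEmpty (SimpleGraph.pathGraph 4 ↪g G)) :
    P4Free G := by
  intro a b c d hab hbc hcd hac had hbd
  have hne_ab : a ≠ b := hab.ne
  have hne_bc : b ≠ c := hbc.ne
  have hne_cd : c ≠ d := hcd.ne
  have hne_ac : a ≠ c := by rintro rfl; exact had hcd
  have hne_ad : a ≠ d := by rintro rfl; exact hac hcd.symm
  have hne_bd : b ≠ d := by rintro rfl; exact had hab
  let f : Fin 4 → V := ![a, b, c, d]
  refine h.elim ⟨⟨f, ?_⟩, ?_⟩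
  · intro u v huv
    fin_cases u <;> fin_cases v <;>
      simp_all [f] <;> first
        | rfl
        | exact absurd huv (by assumption)
        | exact absurd huv.symm (by assumption)
  · intro u v
    fin_cases u <;> fin_cases v <;>
      simp [f, SimpleGraph.pathGraph_adj, show ((3:Fin 4):ℕ) = 3 from rfl] <;>
      first
        | exact fun h' => absurd h' (G.irrefl)
        | exact hab | exact hbc | exact hcd
        | exact hab.symm | exact hbc.symm | exact hcd.symm
        | exact hac | exact had | exact hbd
        | exact fun h' => hac h'.symm
        | exact fun h' => had h'.symm
        | exact fun h' => hbd h'.symm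
        | exact hac | skip

lemma P4Free.compl {G : SimpleGraph V} (hG : P4Free G) : P4Free Gᶜ := by
  intro a b c d hab hbc hcd hac had hbd
  have hne_ac : a ≠ c := by rintro rfl; exact had hcd
  have hne_ad : a ≠ d := by rintro rfl; exact hac hcd.symm
  have hne_bd : b ≠ d := by rintro rfl; exact had hab
  have gac : G.Adj a c := by
    by_contra h'; exact hac ((SimpleGraph.compl_adj G a c).2 ⟨hne_ac, h'⟩)
  have gad : G.Adj a d := by
    by_contra h'; exact had ((SimpleGraph.compl_adj G a d).2 ⟨hne_ad, h'⟩)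
  have gbd : G.Adj b d := by
    by_contra h'; exact hbd ((SimpleGraph.compl_adj G b d).2 ⟨hne_bd, h'⟩)
  have nab : ¬ G.Adj a b := ((SimpleGraph.compl_adj G a b).1 hab).2
  have nbc : ¬ G.Adj b c := ((SimpleGraph.compl_adj G b c).1 hbc).2
  have ncd : ¬ G.Adj c d := ((SimpleGraph.compl_adj G c d).1 hcd).2
  exact hG b d a c gbd gad.symm gac (fun h' => nab h'.symm) nbc (fun h' => ncd h'.symm)

variable [DecidableEq V]

/-- reachability inside a finite vertex set -/
def ReachIn (G : SimpleGraph V) (S : Finset V) (a b : V) : Prop :=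
  ∃ p : G.Walk a b, ∀ x ∈ p.support, x ∈ S

lemma ReachIn.mem_left {G : SimpleGraph V} {S : Finset V} {a b : V}
    (h : ReachIn G S a b) : a ∈ S := by
  obtain ⟨p, hp⟩ := h; exact hp a p.start_mem_support

lemma ReachIn.mem_right {G : SimpleGraph V} {S : Finset V} {a b : V}
    (h : ReachIn G S a b) : b ∈ S := by
  obtain ⟨p, hp⟩ := h; exact hp b p.end_mem_support

lemma reachIn_refl {G : SimpleGraph V} {S : Finset V} {a : V} (ha : a ∈ S) :
    ReachIn G S a a := ⟨SimpleGraph.Walk.nil, by simpa⟩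

lemma ReachIn.symm {G : SimpleGraph V} {S : Finset V} {a b : V}
    (h : ReachIn G S a b) : ReachIn G S b a := by
  obtain ⟨p, hp⟩ := h
  exact ⟨p.reverse, by intro x hx; rw [SimpleGraph.Walk.support_reverse] at hx
                       exact hp x (List.mem_reverse.1 hx)⟩

lemma ReachIn.trans {G : SimpleGraph V} {S : Finset V} {a b c : V}
    (h1 : ReachIn G S a b) (h2 : ReachIn G S b c) : ReachIn G S a c := by
  obtain ⟨p, hp⟩ := h1; obtain ⟨q, hq⟩ := h2
  refine ⟨p.append q, fun x hx => ?_⟩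
  rcases (SimpleGraph.Walk.mem_support_append_iff _ _).1 hx with h | h
  · exact hp x h
  · exact hq x h

lemma reachIn_of_adj {G : SimpleGraph V} {S : Finset V} {a b : V}
    (h : G.Adj a b) (ha : a ∈ S) (hb : b ∈ S) : ReachIn G S a b :=
  ⟨SimpleGraph.Walk.cons h SimpleGraph.Walk.nil, by
    intro x hx; simp at hx; rcases hx with rfl | rfl <;> assumption⟩

lemma ReachIn.cons {G : SimpleGraph V} {S : Finset V} {a b c : V}
    (h : G.Adj a b) (ha : a ∈ S) (hr : ReachIn G S b c) : ReachIn G S a c :=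
  (reachIn_of_adj h ha hr.mem_left).trans hr

/-- escape lemma: a walk in `S` from `u` to `v` with `u ≠ v` yields a neighbour `w` of `v`
reachable from `u` avoiding `v`. -/
lemma escape {G : SimpleGraph V} {S : Finset V} {v : V} :
    ∀ {u : V} (p : G.Walk u v), (∀ x ∈ p.support, x ∈ S) → u ≠ v →
      ∃ w, G.Adj w v ∧ ReachIn G (S.erase v) u w := by
  intro u p
  induction p with
  | nil => intro _ huv; exact absurd rfl huv
  | @cons u x v h q ih =>
    intro hsup huv
    have hu : u ∈ S := hsup u (by simp)
    by_cases hxv : x = v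
    · subst hxv
      exact ⟨u, h, reachIn_refl (Finset.mem_erase.2 ⟨huv, hu⟩)⟩
    · obtain ⟨w, hw, hr⟩ := ih (fun y hy => hsup y (by simp [hy])) hxv
      exact ⟨w, hw, hr.cons h (Finset.mem_erase.2 ⟨huv, hu⟩)⟩

/-- first neighbour of `v` along a walk from a non-neighbour. -/
lemma firstNbr {G : SimpleGraph V} {S : Finset V} {v : V} :
    ∀ {u w : V} (p : G.Walk u w), (∀ x ∈ p.support, x ∈ S) → ¬ G.Adj v u → G.Adj v w →
      ∃ x y, G.Adj x y ∧ ¬ G.Adj v x ∧ G.Adj v y ∧ y ∈ S ∧ ReachIn G S u x := by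
  intro u w p
  induction p with
  | nil => intro _ hnu hw; exact absurd hw hnu
  | @cons u c w h q ih =>
    intro hsup hnu hw
    have hu : u ∈ S := hsup u (by simp)
    have hc : c ∈ S := hsup c (by simp)
    by_cases hvc : G.Adj v c
    · exact ⟨u, c, h, hnu, hvc, hc, reachIn_refl hu⟩
    · obtain ⟨x, y, h1, h2, h3, h4, h5⟩ := ih (fun z hz => hsup z (by simp [hz])) hvc hw
      exact ⟨x, y, h1, h2, h3, h4, h5.cons h hu⟩

def DiscIn (G : SimpleGraph V) (S : Finset V) : Prop :=
  ∃ a ∈ S, ∃ b ∈ S, ¬ ReachIn G S a b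

/-- if `v` is adjacent (in `H`) to everything else in `S`, then in `Hᶜ` it is isolated in `S`. -/
lemma discIn_compl_of_universal {H : SimpleGraph V} {S : Finset V} {v u : V}
    (hv : v ∈ S) (hu : u ∈ S) (huv : u ≠ v)
    (hall : ∀ w ∈ S.erase v, H.Adj v w) : DiscIn Hᶜ S := by
  refine ⟨v, hv, u, hu, fun hr => ?_⟩
  obtain ⟨p, hp⟩ := hr
  cases p with
  | nil => exact huv rfl
  | @cons _ x _ h q =>
    have hx : x ∈ S := hp x (by simp)
    have hxv : x ≠ v := h.ne'
    exact ((SimpleGraph.compl_adj H v x).1 h).2 (hall x (Finset.mem_erase.2 ⟨hxv, hx⟩))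

/-- key step (Seinsche): in a P4-free graph, if `S \ {v}` is disconnected but `S` is connected,
then `v` is adjacent to everything else in `S`. -/
lemma universal_of_cut {G : SimpleGraph V} (hG : P4Free G) {S : Finset V} {v : V}
    (hv : v ∈ S) (hd : DiscIn G (S.erase v)) :
    DiscIn G S ∨ ∀ u ∈ S.erase v, G.Adj v u := by
  by_cases hD : DiscIn G S
  · exact Or.inl hD
  right
  have hconn : ∀ a ∈ S, ∀ b ∈ S, ReachIn G S a b := by
    intro a ha b hb
    by_contra hr
    exact hD ⟨a, ha, b, hb, hr⟩
  intro u hu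
  by_contra hvu
  obtain ⟨hune, huS⟩ := Finset.mem_erase.1 hu
  obtain ⟨a, ha, b, hb, hab⟩ := hd
  -- find z in S.erase v not ReachIn (S.erase v)-connected to u
  have hz : ∃ z ∈ S.erase v, ¬ ReachIn G (S.erase v) u z := by
    by_contra hc
    push_neg at hc
    exact hab ((hc a ha).symm.trans (hc b hb))
  obtain ⟨z, hzmem, hz⟩ := hz
  obtain ⟨hzne, hzS⟩ := Finset.mem_erase.1 hzmem
  -- w : neighbour of v reachable from u avoiding v
  have hW : ∃ w, G.Adj w v ∧ ReachIn G (S.erase v) u w := by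
    obtain ⟨p, hp⟩ := hconn u huS v hv
    exact escape p hp hune
  obtain ⟨w, hwv, hw⟩ := hW
  -- w₂ : neighbour of v reachable from z avoiding v
  have hW2 : ∃ w, G.Adj w v ∧ ReachIn G (S.erase v) z w := by
    obtain ⟨p, hp⟩ := hconn z hzS v hv
    exact escape p hp hzne
  obtain ⟨w₂, hw2v, hw2⟩ := hW2
  -- first neighbour of v along the walk u → w in S.erase v
  have hXY : ∃ x y, G.Adj x y ∧ ¬ G.Adj v x ∧ G.Adj v y ∧ y ∈ S.erase v ∧
      ReachIn G (S.erase v) u x := by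
    obtain ⟨p, hp⟩ := hw
    exact firstNbr p hp hvu hwv.symm
  obtain ⟨x, y, hxy, hvx, hvy, hyS, hux⟩ := hXY
  -- now (w₂, v, y, x) is an induced P4
  have hw2S := hw2.mem_right
  have huy : ReachIn G (S.erase v) u y := hux.trans (reachIn_of_adj hxy hux.mem_right hyS)
  have hnw2y : ¬ G.Adj w₂ y := by
    intro hadj
    exact hz ((huy.trans (reachIn_of_adj hadj.symm hyS hw2S)).trans hw2.symm)
  have hnw2x : ¬ G.Adj w₂ x := by
    intro hadj
    exact hz ((hux.trans (reachIn_of_adj hadj.symm hux.mem_right hw2S)).trans hw2.symm)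
  exact hG w₂ v y x hw2v hvy hxy.symm hnw2y hnw2x hvx

lemma reach_pair {H : SimpleGraph V} {a b : V} (h : ReachIn H {a, b} a b) :
    a = b ∨ H.Adj a b := by
  obtain ⟨p, hp⟩ := h
  cases p with
  | nil => exact Or.inl rfl
  | @cons _ x _ hax q =>
    have hx : x ∈ ({a, b} : Finset V) := hp x (by simp)
    have : x = b := by
      rcases Finset.mem_insert.1 hx with rfl | hx
      · exact absurd rfl hax.ne'
      · simpa using hx
    subst this
    exact Or.inr hax

lemma seinsche {G : SimpleGraph V} (hG : P4Free G) :
    ∀ n (S : Finset V), S.card = n → 2 ≤ n → DiscIn G S ∨ DiscIn Gᶜ S := by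
  intro n
  induction n with
  | zero => intro S _ h2; omega
  | succ m ih =>
    intro S hcard h2
    by_cases hm : m + 1 = 2
    · -- base case : two vertices
      obtain ⟨a, b, hne, rfl⟩ := Finset.card_eq_two.1 (hcard.trans hm)
      by_cases hadj : G.Adj a b
      · refine Or.inr ⟨a, by simp, b, by simp, fun hr => ?_⟩
        rcases reach_pair hr with rfl | h'
        · exact hne rfl
        · exact ((SimpleGraph.compl_adj G a b).1 h').2 hadj
      · refine Or.inl ⟨a, by simp, b, by simp, fun hr => ?_⟩
        rcases reach_pair hr with rfl | h'
        · exact hne rfl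
        · exact hadj h'
    · -- inductive step
      have hm3 : 3 ≤ m + 1 := by omega
      obtain ⟨v, hv⟩ := Finset.card_pos.1 (by omega : 0 < S.card)
      have hS' : (S.erase v).card = m := by rw [Finset.card_erase_of_mem hv, hcard]; omega
      obtain ⟨u, hu⟩ := Finset.card_pos.1 (by omega : 0 < (S.erase v).card)
      obtain ⟨hune, huS⟩ := Finset.mem_erase.1 hu
      rcases ih (S.erase v) hS' (by omega) with hd | hd
      · rcases universal_of_cut hG hv hd with hD | hall
        · exact Or.inl hD
        · exact Or.inr (discIn_compl_of_universal hv huS hune hall)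
      · rcases universal_of_cut hG.compl hv hd with hD | hall
        · exact Or.inr hD
        · have := discIn_compl_of_universal (H := Gᶜ) hv huS hune hall
          rw [compl_compl] at this
          exact Or.inl this

lemma joinOf {G : SimpleGraph V} (hG : P4Free G) (S : Finset V) (h2 : 2 ≤ S.card)
    (hc : ∀ a ∈ S, ∀ b ∈ S, ReachIn G S a b) :
    ∃ X : Finset V, X ⊆ S ∧ X.Nonempty ∧ (S \ X).Nonempty ∧
      ∀ x ∈ X, ∀ y ∈ S \ X, G.Adj x y := by
  classical
  rcases seinsche hG S.card S rfl h2 with hd | hd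
  · obtain ⟨a, ha, b, hb, hab⟩ := hd
    exact absurd (hc a ha b hb) hab
  · obtain ⟨a, ha, b, hb, hab⟩ := hd
    refine ⟨S.filter (fun y => ReachIn Gᶜ S a y), Finset.filter_subset _ _,
      ⟨a, Finset.mem_filter.2 ⟨ha, reachIn_refl ha⟩⟩,
      ⟨b, Finset.mem_sdiff.2 ⟨hb, fun hbX => hab (Finset.mem_filter.1 hbX).2⟩⟩, ?_⟩
    intro x hx y hy
    obtain ⟨hxS, hxr⟩ := Finset.mem_filter.1 hx
    obtain ⟨hyS, hyn⟩ := Finset.mem_sdiff.1 hy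
    by_contra hadj
    have hne : x ≠ y := by rintro rfl; exact hyn hx
    have : ReachIn Gᶜ S a y :=
      hxr.trans (reachIn_of_adj ((SimpleGraph.compl_adj G x y).2 ⟨hne, hadj⟩) hxS hyS)
    exact hyn (Finset.mem_filter.2 ⟨hyS, this⟩)

lemma no_samecolor_edge {G : SimpleGraph V} {C : Type*} [DecidableEq C] {ψ : V → C}
    (h : IsLinearColoring G ψ) {p q : V} (hadj : G.Adj p q) (hcol : ψ p = ψ q) : False := by
  have hpath : (SimpleGraph.Walk.cons hadj SimpleGraph.Walk.nil).IsPath := by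
    simp [SimpleGraph.Walk.isPath_def, hadj.ne]
  obtain ⟨w, hw, hcount⟩ := h _ hpath
  simp only [SimpleGraph.Walk.support_cons, SimpleGraph.Walk.support_nil, List.map_cons,
    List.map_nil, List.mem_cons, List.not_mem_nil, or_false, List.mem_singleton] at hw hcount
  rcases hw with rfl | rfl <;> simp [hcol, List.count_cons] at hcount

lemma no_samecolor_p4 {G : SimpleGraph V} {C : Type*} [DecidableEq C] {ψ : V → C}
    (h : IsLinearColoring G ψ) {a b a' b' : V}
    (h1 : G.Adj a b) (h2 : G.Adj b a') (h3 : G.Adj a' b')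
    (hne1 : a ≠ a') (hne2 : b ≠ b') (hne3 : a ≠ b')
    (hca : ψ a' = ψ a) (hcb : ψ b' = ψ b) : False := by
  have hpath : (SimpleGraph.Walk.cons h1 (SimpleGraph.Walk.cons h2
      (SimpleGraph.Walk.cons h3 SimpleGraph.Walk.nil))).IsPath := by
    simp [SimpleGraph.Walk.isPath_def, h1.ne, h2.ne, h3.ne, hne1, hne2, hne3, h2.ne']
  obtain ⟨w, hw, hcount⟩ := h _ hpath
  simp only [SimpleGraph.Walk.support_cons, SimpleGraph.Walk.support_nil, List.map_cons,
    List.map_nil, List.mem_cons, List.not_mem_nil, or_false, List.mem_singleton] at hw hcount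
  have : ψ w = ψ a ∨ ψ w = ψ b := by
    rcases hw with rfl | rfl | rfl | rfl
    · exact Or.inl rfl
    · exact Or.inr rfl
    · exact Or.inl hca
    · exact Or.inr hcb
  rw [hca, hcb] at hcount
  by_cases hab : ψ a = ψ b
  · rcases this with hwc | hwc <;> rw [hwc] at hcount <;>
      simp [List.count_cons, hab] at hcount
  · rcases this with hwc | hwc <;> rw [hwc] at hcount <;>
      simp [List.count_cons, hab, Ne.symm hab] at hcount


end AuxCograph

/-- If `G` is a cograph (no induced path on four vertices), then
every linear coloring of `G` is also a centered coloring. -/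
theorem linear_is_centered_of_cograph {V : Type*} [Fintype V]
    (G : SimpleGraph V) (hco : IsEmpty (SimpleGraph.pathGraph 4 ↪g G))
    {C : Type*} [DecidableEq C] (ψ : V → C) (h : IsLinearColoring G ψ) :
    IsCenteredColoring G ψ := by
  classical
  have hG : P4Free G := p4free_of_isEmpty hco
  intro S hS hconn
  by_contra hno
  push_neg at hno
  -- reachability within S
  have hc : ∀ a ∈ S, ∀ b ∈ S, ReachIn G S a b := by
    intro a ha b hb
    obtain ⟨p⟩ := hconn.preconnected ⟨a, ha⟩ ⟨b, hb⟩
    refine ⟨p.map (SimpleGraph.Embedding.induce (S : Set V)).toHom, ?_⟩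
    intro x hx
    replace hx : x ∈ (p.map (SimpleGraph.Embedding.induce (S : Set V)).toHom).support := hx
    rw [SimpleGraph.Walk.support_map] at hx
    obtain ⟨⟨y, hy⟩, _, rfl⟩ := List.mem_map.1 hx
    simpa using hy
  -- every color in S appears at least twice
  have hrep : ∀ w ∈ S, ∃ w' ∈ S, w' ≠ w ∧ ψ w' = ψ w := by
    intro w hw
    have h1 : w ∈ S.filter (fun x => ψ x = ψ w) := Finset.mem_filter.2 ⟨hw, rfl⟩
    have hpos : 0 < (S.filter (fun x => ψ x = ψ w)).card := Finset.card_pos.2 ⟨w, h1⟩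
    have hne1 := hno w hw
    have hcard : 1 < (S.filter (fun x => ψ x = ψ w)).card := by omega
    obtain ⟨p, hp, q, hq, hpq⟩ := Finset.one_lt_card.1 hcard
    obtain ⟨hpS, hpc⟩ := Finset.mem_filter.1 hp
    obtain ⟨hqS, hqc⟩ := Finset.mem_filter.1 hq
    by_cases hpw : p = w
    · exact ⟨q, hqS, by rw [← hpw]; exact fun h' => hpq h'.symm, hqc⟩
    · exact ⟨p, hpS, hpw, hpc⟩
  have h2 : 2 ≤ S.card := by
    obtain ⟨w, hw⟩ := hS
    obtain ⟨w', hw', hne, _⟩ := hrep w hw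
    exact Finset.one_lt_card.2 ⟨w', hw', w, hw, hne⟩
  obtain ⟨X, hXS, ⟨a, haX⟩, ⟨b, hbY⟩, hcross⟩ := joinOf hG S h2 hc
  have haS : a ∈ S := hXS haX
  have hbS : b ∈ S := (Finset.mem_sdiff.1 hbY).1
  obtain ⟨a', ha'S, ha'ne, ha'c⟩ := hrep a haS
  by_cases ha'X : a' ∈ X
  · obtain ⟨b', hb'S, hb'ne, hb'c⟩ := hrep b hbS
    by_cases hb'X : b' ∈ X
    · exact no_samecolor_edge h (hcross b' hb'X b hbY) hb'c
    · have hb'Y : b' ∈ S \ X := Finset.mem_sdiff.2 ⟨hb'S, hb'X⟩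
      have e1 : G.Adj a b := hcross a haX b hbY
      have e2 : G.Adj b a' := (hcross a' ha'X b hbY).symm
      have e3 : G.Adj a' b' := hcross a' ha'X b' hb'Y
      have hab' : a ≠ b' := by
        rintro rfl; exact (Finset.mem_sdiff.1 hb'Y).2 haX
      exact no_samecolor_p4 h e1 e2 e3 (Ne.symm ha'ne) (Ne.symm hb'ne) hab' ha'c hb'c
  · have ha'Y : a' ∈ S \ X := Finset.mem_sdiff.2 ⟨ha'S, ha'X⟩
    exact no_samecolor_edge h (hcross a haX a' ha'Y) ha'c.symm
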